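/- RCUs bound: For a channel P_{Y|X}, input distribution P_X, decoding metric q, and any s ≥ 0 and integer M ≥ 2, there exists a code with M codewords (codewords drawn i.i.d. from P_X) whose average error probability under the maximum-metric decoder is upper bounded by E[ exp( −[ i_s(X, Y) − log(M−1) ]⁺ ) ], where i_s is the generalized information density and [a]⁺ = max{0, a}. -/

import Mathlib

open MeasureTheory ProbabilityTheory

/-- Generalized information density for decoding metric `q` at parameter `s`. -/
noncomputable def genInfoDensity {X Y : Type*} [MeasurableSpace X]
    (P_X : Measure X) (q : X → Y → ℝ) (s : ℝ) (x : X) (y : Y) : ℝ :=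
  Real.log (q x y ^ s / ∫ x', q x' y ^ s ∂P_X)

open scoped ENNReal

section RCUsAux

variable {X Y : Type*} [MeasurableSpace X] [MeasurableSpace Y]

lemma pi_eval_preimage_prob {ι : Type*} [Fintype ι] {α : ι → Type*}
    [∀ i, MeasurableSpace (α i)] (μ : ∀ i, Measure (α i)) [∀ i, IsProbabilityMeasure (μ i)]
    (j : ι) (A : Set (α j)) :
    Measure.pi μ (Function.eval j ⁻¹' A) = μ j A := by
  classical
  rw [Set.eval_preimage, Measure.pi_pi, Fintype.prod_eq_single j
    (fun i hij => by rw [Function.update_of_ne hij]; exact measure_univ)]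
  rw [Function.update_self]

lemma measurableSet_errSet {q : X → Y → ℝ}
    (hq_meas : Measurable fun p : X × Y => q p.1 p.2) {M : ℕ} (m : Fin M) :
    MeasurableSet {p : (Fin M → X) × Y | ∃ j, j ≠ m ∧ q (p.1 m) p.2 ≤ q (p.1 j) p.2} := by
  have h : {p : (Fin M → X) × Y | ∃ j, j ≠ m ∧ q (p.1 m) p.2 ≤ q (p.1 j) p.2}
      = ⋃ j, ({p : (Fin M → X) × Y | j ≠ m} ∩
          {p : (Fin M → X) × Y | q (p.1 m) p.2 ≤ q (p.1 j) p.2}) := by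
    ext p
    simp only [Set.mem_setOf_eq, Set.mem_iUnion, Set.mem_inter_iff]
  rw [h]
  refine MeasurableSet.iUnion fun j => (MeasurableSet.const _).inter ?_
  exact measurableSet_le
    (hq_meas.comp' (f := fun p : (Fin M → X) × Y => (p.1 m, p.2)) (((measurable_pi_apply m).comp measurable_fst).prodMk measurable_snd))
    (hq_meas.comp' (f := fun p : (Fin M → X) × Y => (p.1 j, p.2)) (((measurable_pi_apply j).comp measurable_fst).prodMk measurable_snd))

lemma measurable_errProb (κ : Kernel X Y) [IsMarkovKernel κ] {q : X → Y → ℝ}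
    (hq_meas : Measurable fun p : X × Y => q p.1 p.2) {M : ℕ} (m : Fin M) :
    Measurable fun c : Fin M → X =>
      κ (c m) {y | ∃ j, j ≠ m ∧ q (c m) y ≤ q (c j) y} := by
  have h := Kernel.measurable_kernel_prodMk_left
    (κ := κ.comap (fun c : Fin M → X => c m) (measurable_pi_apply m))
    (measurableSet_errSet hq_meas m)
  simpa [Kernel.comap_apply, Set.preimage_setOf_eq] using h

lemma markov_ptwise (P_X : Measure X) [IsProbabilityMeasure P_X]
    (q : X → Y → ℝ) (C : ℝ)
    (hq_meas : Measurable fun p : X × Y => q p.1 p.2)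
    (hq_nonneg : ∀ x y, 0 ≤ q x y) (hq_bdd : ∀ x y, q x y ≤ C)
    (s : ℝ) (hs : 0 ≤ s) (M : ℕ) (hM : 2 ≤ M) (x : X) (y : Y) :
    min 1 ((M - 1 : ℕ) * P_X {x' | q x y ≤ q x' y})
      ≤ ENNReal.ofReal
          (Real.exp (-max 0 (genInfoDensity P_X q s x y - Real.log ((M : ℝ) - 1)))) := by
  have hM1 : (1 : ℝ) ≤ (M : ℝ) - 1 := by
    have h2 : (2 : ℝ) ≤ (M : ℝ) := by exact_mod_cast hM
    linarith
  have hlog0 : 0 ≤ Real.log ((M : ℝ) - 1) := Real.log_nonneg hM1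
  unfold genInfoDensity
  set Z : ℝ := ∫ x', q x' y ^ s ∂P_X with hZdef
  set L : ℝ := Real.log (q x y ^ s / Z) with hLdef
  by_cases hcase : L - Real.log ((M : ℝ) - 1) ≤ 0
  · rw [max_eq_left hcase, neg_zero, Real.exp_zero, ENNReal.ofReal_one]
    exact min_le_left _ _
  · push_neg at hcase
    have hqs0 : 0 ≤ q x y ^ s := Real.rpow_nonneg (hq_nonneg x y) s
    have hZ0 : 0 ≤ Z := integral_nonneg fun x' => Real.rpow_nonneg (hq_nonneg x' y) s
    have hLpos : 0 < L := lt_of_le_of_lt hlog0 (by linarith)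
    have ht : 1 < q x y ^ s / Z := by
      by_contra h'
      push_neg at h'
      have : L ≤ 0 := Real.log_nonpos (div_nonneg hqs0 hZ0) h'
      linarith
    have hZpos : 0 < Z := by
      rcases hZ0.lt_or_eq with h | h
      · exact h
      · rw [← h, div_zero] at ht; linarith
    have hqs_pos : 0 < q x y ^ s := hZpos.trans ((one_lt_div hZpos).mp ht)
    -- rewrite the RHS
    have hRHS : Real.exp (-max 0 (L - Real.log ((M : ℝ) - 1)))
        = ((M : ℝ) - 1) * (Z / q x y ^ s) := by
      rw [max_eq_right hcase.le, neg_sub, Real.exp_sub, Real.exp_log (by linarith),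
        hLdef, Real.exp_log (by positivity)]
      field_simp
    rw [hRHS]
    refine le_trans (min_le_right _ _) ?_
    -- Markov inequality
    have hqmy : Measurable fun x' => q x' y :=
      hq_meas.comp' (measurable_id.prodMk measurable_const)
    have hm : Measurable fun x' => q x' y ^ s :=
      (Real.continuous_rpow_const hs).measurable.comp' hqmy
    have hint : Integrable (fun x' => q x' y ^ s) P_X := by
      refine Integrable.mono' (integrable_const (C ^ s)) hm.aestronglyMeasurable
        (ae_of_all _ fun x' => ?_)
      rw [Real.norm_eq_abs, abs_of_nonneg (Real.rpow_nonneg (hq_nonneg x' y) s)]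
      exact Real.rpow_le_rpow (hq_nonneg x' y) (hq_bdd x' y) hs
    have hlin : ∫⁻ x', ENNReal.ofReal (q x' y ^ s) ∂P_X = ENNReal.ofReal Z :=
      (ofReal_integral_eq_lintegral_ofReal hint
        (ae_of_all _ fun x' => Real.rpow_nonneg (hq_nonneg x' y) s)).symm
    have hmar := mul_meas_ge_le_lintegral₀ (μ := P_X)
      (f := fun x' => ENNReal.ofReal (q x' y ^ s))
      (ENNReal.measurable_ofReal.comp hm).aemeasurable (ENNReal.ofReal (q x y ^ s))
    have hmono : {x' | q x y ≤ q x' y}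
        ⊆ {x' | ENNReal.ofReal (q x y ^ s) ≤ ENNReal.ofReal (q x' y ^ s)} :=
      fun x' hx' =>
        ENNReal.ofReal_le_ofReal (Real.rpow_le_rpow (hq_nonneg x y) hx' hs)
    have h2 : ENNReal.ofReal (q x y ^ s) * P_X {x' | q x y ≤ q x' y}
        ≤ ENNReal.ofReal Z :=
      le_trans (mul_le_mul_right (measure_mono hmono) _) (hlin ▸ hmar)
    have hPA : P_X {x' | q x y ≤ q x' y} ≤ ENNReal.ofReal (Z / q x y ^ s) := by
      rw [ENNReal.ofReal_div_of_pos hqs_pos]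
      rw [ENNReal.le_div_iff_mul_le (Or.inl (ENNReal.ofReal_pos.mpr hqs_pos).ne')
        (Or.inl ENNReal.ofReal_ne_top)]
      rw [mul_comm]; exact h2
    calc ((M - 1 : ℕ) : ℝ≥0∞) * P_X {x' | q x y ≤ q x' y}
        ≤ ((M - 1 : ℕ) : ℝ≥0∞) * ENNReal.ofReal (Z / q x y ^ s) :=
          mul_le_mul_right hPA _
      _ = ENNReal.ofReal ((M : ℝ) - 1) * ENNReal.ofReal (Z / q x y ^ s) := by
          congr 1
          rw [← ENNReal.ofReal_natCast (M - 1)]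
          congr 1
          rw [Nat.cast_sub (by omega : 1 ≤ M), Nat.cast_one]
      _ = ENNReal.ofReal (((M : ℝ) - 1) * (Z / q x y ^ s)) :=
          (ENNReal.ofReal_mul (by linarith)).symm

lemma avg_bound (P_X : Measure X) [IsProbabilityMeasure P_X]
    (κ : Kernel X Y) [IsMarkovKernel κ]
    (q : X → Y → ℝ)
    (hq_meas : Measurable fun p : X × Y => q p.1 p.2)
    {M : ℕ} (m : Fin M) :
    ∫⁻ c : Fin M → X, κ (c m) {y | ∃ j, j ≠ m ∧ q (c m) y ≤ q (c j) y}
        ∂(Measure.pi fun _ : Fin M => P_X)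
      ≤ ∫⁻ p : X × Y, min 1 ((M - 1 : ℕ) * P_X {x' | q p.1 p.2 ≤ q x' p.2}) ∂(P_X ⊗ₘ κ) := by
  classical
  haveI : Unique {j : Fin M // j = m} := ⟨⟨⟨m, rfl⟩⟩, fun a => Subtype.ext a.2⟩
  set ν₁ : Measure ({j : Fin M // j = m} → X) := Measure.pi fun _ => P_X with hν₁
  set ν₂ : Measure ({j : Fin M // ¬j = m} → X) := Measure.pi fun _ => P_X with hν₂
  set e := MeasurableEquiv.piEquivPiSubtypeProd (fun _ : Fin M => X) (fun j => j = m) with he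
  have hpres : MeasurePreserving e (Measure.pi fun _ : Fin M => P_X) (ν₁.prod ν₂) := by
    have h := measurePreserving_piEquivPiSubtypeProd (fun _ : Fin M => P_X) (fun j => j = m)
    rw [hν₁, hν₂, he]
    convert h using 2 <;> congr!
  set F : (Fin M → X) → ℝ≥0∞ :=
    fun c => κ (c m) {y | ∃ j, j ≠ m ∧ q (c m) y ≤ q (c j) y} with hF
  have hFmeas : Measurable F := measurable_errProb κ hq_meas m
  set G : X → ({j : Fin M // ¬j = m} → X) → ℝ≥0∞ :=
    fun x b => κ x {y | ∃ j : {j : Fin M // ¬j = m}, q x y ≤ q (b j) y} with hG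
  have hFG : ∀ (a : {j : Fin M // j = m} → X) (b : {j : Fin M // ¬j = m} → X),
      F (e.symm (a, b)) = G (a ⟨m, rfl⟩) b := by
    intro a b
    have hm' : (e.symm (a, b)) m = a ⟨m, rfl⟩ := by
      simp [he, MeasurableEquiv.piEquivPiSubtypeProd, Equiv.piEquivPiSubtypeProd]
    have hj' : ∀ (j : Fin M) (hj : ¬j = m), (e.symm (a, b)) j = b ⟨j, hj⟩ := by
      intro j hj
      simp [he, MeasurableEquiv.piEquivPiSubtypeProd, Equiv.piEquivPiSubtypeProd, hj]
    rw [hF]; dsimp only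
    rw [hm']
    congr 1
    ext y
    constructor
    · rintro ⟨j, hj, hle⟩
      exact ⟨⟨j, hj⟩, by rwa [hj' j hj] at hle⟩
    · rintro ⟨⟨j, hj⟩, hle⟩
      exact ⟨j, hj, by rwa [hj' j hj]⟩
  -- measurability of G in both arguments
  set D : Set ((X × ({j : Fin M // ¬j = m} → X)) × Y) :=
    {z | ∃ j : {j : Fin M // ¬j = m}, q z.1.1 z.2 ≤ q (z.1.2 j) z.2} with hD
  have hDmeas : MeasurableSet D := by
    rw [hD, Set.setOf_exists]
    refine MeasurableSet.iUnion fun j => measurableSet_le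
      (f := fun z : (X × ({j : Fin M // ¬j = m} → X)) × Y => q z.1.1 z.2)
      (g := fun z : (X × ({j : Fin M // ¬j = m} → X)) × Y => q (z.1.2 j) z.2)
      (hq_meas.comp' (measurable_fst.fst.prodMk measurable_snd))
      (hq_meas.comp' (f := fun z : (X × ({j : Fin M // ¬j = m} → X)) × Y => (z.1.2 j, z.2))
        (((measurable_pi_apply j).comp' measurable_fst.snd).prodMk measurable_snd))
  have hGmeas : Measurable fun zb : X × ({j : Fin M // ¬j = m} → X) => G zb.1 zb.2 := by
    have h := Kernel.measurable_kernel_prodMk_left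
      (κ := κ.comap (Prod.fst : X × ({j : Fin M // ¬j = m} → X) → X) measurable_fst) hDmeas
    simpa [Kernel.comap_apply, hG, hD, Set.preimage_setOf_eq] using h
  -- pointwise probability bound over the other codewords
  have hbound : ∀ (x : X) (y : Y),
      ν₂ {b : {j : Fin M // ¬j = m} → X | ∃ j, q x y ≤ q (b j) y}
        ≤ min 1 ((M - 1 : ℕ) * P_X {x' | q x y ≤ q x' y}) := by
    intro x y
    refine le_min prob_le_one ?_
    have hU : {b : {j : Fin M // ¬j = m} → X | ∃ j, q x y ≤ q (b j) y}
        = ⋃ j : {j : Fin M // ¬j = m}, Function.eval j ⁻¹' {x' | q x y ≤ q x' y} := by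
      rw [Set.setOf_exists]; rfl
    rw [hU]
    refine le_trans (measure_iUnion_le _) ?_
    rw [tsum_fintype]
    refine le_of_eq ?_
    have hcard : Fintype.card {j : Fin M // ¬j = m} = M - 1 := by
      rw [Fintype.card_subtype_compl, Fintype.card_subtype_eq, Fintype.card_fin]
    calc ∑ j : {j : Fin M // ¬j = m}, ν₂ (Function.eval j ⁻¹' {x' | q x y ≤ q x' y})
        = ∑ _j : {j : Fin M // ¬j = m}, P_X {x' | q x y ≤ q x' y} := by
          refine Finset.sum_congr rfl fun j _ => ?_
          exact pi_eval_preimage_prob (fun _ => P_X) j _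
      _ = (M - 1 : ℕ) * P_X {x' | q x y ≤ q x' y} := by
          rw [Finset.sum_const, Finset.card_univ, hcard, nsmul_eq_mul]
  -- step 4 : fix x, swap integrals and bound
  have hstep4 : ∀ x : X, ∫⁻ b, G x b ∂ν₂
      ≤ ∫⁻ y, min 1 ((M - 1 : ℕ) * P_X {x' | q x y ≤ q x' y}) ∂(κ x) := by
    intro x
    set W : Set (({j : Fin M // ¬j = m} → X) × Y) :=
      {z | ∃ j : {j : Fin M // ¬j = m}, q x z.2 ≤ q (z.1 j) z.2} with hW
    have hWmeas : MeasurableSet W := by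
      rw [hW, Set.setOf_exists]
      refine MeasurableSet.iUnion fun j => measurableSet_le
        (f := fun z : ({j : Fin M // ¬j = m} → X) × Y => q x z.2)
        (g := fun z : ({j : Fin M // ¬j = m} → X) × Y => q (z.1 j) z.2)
        (hq_meas.comp' (measurable_const.prodMk measurable_snd))
        (hq_meas.comp' (f := fun z : ({j : Fin M // ¬j = m} → X) × Y => (z.1 j, z.2))
          (((measurable_pi_apply j).comp' measurable_fst).prodMk measurable_snd))
    have h1 : ∀ b, G x b = ∫⁻ y, W.indicator 1 (b, y) ∂(κ x) := by
      intro b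
      have hset : MeasurableSet (Prod.mk b ⁻¹' W) := measurable_prodMk_left hWmeas
      have : (fun y => W.indicator (1 : ({j : Fin M // ¬j = m} → X) × Y → ℝ≥0∞) (b, y))
          = (Prod.mk b ⁻¹' W).indicator 1 := rfl
      rw [hG]; dsimp only
      rw [this, lintegral_indicator_one hset]
      rfl
    calc ∫⁻ b, G x b ∂ν₂
        = ∫⁻ b, ∫⁻ y, W.indicator 1 (b, y) ∂(κ x) ∂ν₂ := lintegral_congr h1
      _ = ∫⁻ y, ∫⁻ b, W.indicator 1 (b, y) ∂ν₂ ∂(κ x) :=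
          lintegral_lintegral_swap ((measurable_one.indicator hWmeas).aemeasurable)
      _ ≤ ∫⁻ y, min 1 ((M - 1 : ℕ) * P_X {x' | q x y ≤ q x' y}) ∂(κ x) := by
          refine lintegral_mono fun y => ?_
          have hset : MeasurableSet ((fun b => (b, y)) ⁻¹' W) :=
            measurable_prodMk_right hWmeas
          have hrw : (fun b => W.indicator (1 : ({j : Fin M // ¬j = m} → X) × Y → ℝ≥0∞) (b, y))
              = ((fun b => (b, y)) ⁻¹' W).indicator 1 := rfl
          rw [hrw, lintegral_indicator_one hset]
          exact hbound x y
  -- measurability for the iterated integral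
  have hφmeas : Measurable fun x => ∫⁻ b, G x b ∂ν₂ :=
    hGmeas.lintegral_prod_right'
  -- the compProd integral
  have hcomp : ∫⁻ p : X × Y, min 1 ((M - 1 : ℕ) * P_X {x' | q p.1 p.2 ≤ q x' p.2}) ∂(P_X ⊗ₘ κ)
      = ∫⁻ x, ∫⁻ y, min 1 ((M - 1 : ℕ) * P_X {x' | q x y ≤ q x' y}) ∂(κ x) ∂P_X := by
    refine Measure.lintegral_compProd ?_
    refine Measurable.min measurable_const (Measurable.const_mul ?_ _)
    have hV : MeasurableSet {z : (X × Y) × X | q z.1.1 z.1.2 ≤ q z.2 z.1.2} :=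
      measurableSet_le (hq_meas.comp' (measurable_fst.fst.prodMk measurable_fst.snd))
        (hq_meas.comp' (measurable_snd.prodMk measurable_fst.snd))
    have h := Kernel.measurable_kernel_prodMk_left
      (κ := Kernel.const (X × Y) P_X) hV
    simpa [Kernel.const_apply, Set.preimage_setOf_eq] using h
  calc ∫⁻ c, F c ∂(Measure.pi fun _ : Fin M => P_X)
      = ∫⁻ z, F (e.symm z) ∂(ν₁.prod ν₂) := ((hpres.symm e).lintegral_comp hFmeas).symm
    _ = ∫⁻ a, ∫⁻ b, G (a ⟨m, rfl⟩) b ∂ν₂ ∂ν₁ := by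
        rw [lintegral_prod (fun z => F (e.symm z)) ((hFmeas.comp e.symm.measurable).aemeasurable)]
        exact lintegral_congr fun a => lintegral_congr fun b => hFG a b
    _ = ∫⁻ x, ∫⁻ b, G x b ∂ν₂ ∂P_X := by
        have hmp : ν₁.map (Function.eval (⟨m, rfl⟩ : {j : Fin M // j = m})) = P_X := by
          ext A hA
          rw [Measure.map_apply (measurable_pi_apply _) hA, hν₁,
            pi_eval_preimage_prob (fun _ => P_X) _ A]
        conv_rhs => rw [← hmp]
        rw [lintegral_map hφmeas (measurable_pi_apply _)]
    _ ≤ ∫⁻ x, ∫⁻ y, min 1 ((M - 1 : ℕ) * P_X {x' | q x y ≤ q x' y}) ∂(κ x) ∂P_X :=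
        lintegral_mono fun x => hstep4 x
    _ = ∫⁻ p : X × Y, min 1 ((M - 1 : ℕ) * P_X {x' | q p.1 p.2 ≤ q x' p.2}) ∂(P_X ⊗ₘ κ) :=
        hcomp.symm

end RCUsAux

/-- RCUs bound: for any channel `κ`, input distribution `P_X`, bounded
nonnegative decoding metric `q`, `s ≥ 0` and `M ≥ 2`, there exists a code with
`M` codewords whose average error probability under the maximum-metric decoder
(ties counted as errors) is at most
`E[ exp( −[ i_s(X,Y) − log(M−1) ]⁺ ) ]`. -/
theorem rcus_bound {X Y : Type*} [MeasurableSpace X] [MeasurableSpace Y]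
    (P_X : Measure X) [IsProbabilityMeasure P_X]
    (κ : Kernel X Y) [IsMarkovKernel κ]
    (q : X → Y → ℝ) (C : ℝ)
    (hq_meas : Measurable fun p : X × Y => q p.1 p.2)
    (hq_nonneg : ∀ x y, 0 ≤ q x y) (hq_bdd : ∀ x y, q x y ≤ C)
    (s : ℝ) (hs : 0 ≤ s) (M : ℕ) (hM : 2 ≤ M) :
    ∃ c : Fin M → X,
      (1 / M : ℝ) * ∑ m, ((κ (c m)) {y | ∃ j, j ≠ m ∧ q (c m) y ≤ q (c j) y}).toReal
        ≤ ∫ p, Real.exp (-max 0 (genInfoDensity P_X q s p.1 p.2 - Real.log (M - 1)))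
            ∂(P_X ⊗ₘ κ) := by
  classical
  set Pμ : Measure (X × Y) := P_X ⊗ₘ κ with hPμ
  set r : X × Y → ℝ := fun p =>
    Real.exp (-max 0 (genInfoDensity P_X q s p.1 p.2 - Real.log ((M : ℝ) - 1))) with hr
  -- measurability and integrability of r
  have hqm : Measurable fun p : X × Y => q p.1 p.2 ^ s :=
    (Real.continuous_rpow_const hs).measurable.comp' hq_meas
  have hZm : Measurable fun y : Y => ∫ x', q x' y ^ s ∂P_X := by
    have hsm : StronglyMeasurable fun p : Y × X => q p.2 p.1 ^ s :=
      ((Real.continuous_rpow_const hs).measurable.comp'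
        (hq_meas.comp' (measurable_snd.prodMk measurable_fst))).stronglyMeasurable
    exact hsm.integral_prod_right'.measurable
  have hgi : Measurable fun p : X × Y => genInfoDensity P_X q s p.1 p.2 := by
    unfold genInfoDensity
    exact Real.measurable_log.comp' (hqm.div (hZm.comp measurable_snd))
  have hrm : Measurable r := by
    rw [hr]
    exact Real.measurable_exp.comp' ((measurable_const.max (hgi.sub measurable_const)).neg)
  have hr_nonneg : ∀ p, 0 ≤ r p := fun p => (Real.exp_pos _).le
  have hri : Integrable r Pμ := by
    refine Integrable.mono' (integrable_const 1) hrm.aestronglyMeasurable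
      (ae_of_all _ fun p => ?_)
    rw [Real.norm_eq_abs, abs_of_nonneg (hr_nonneg p)]
    calc r p ≤ Real.exp 0 := Real.exp_le_exp.mpr (neg_nonpos.mpr (le_max_left 0 _))
      _ = 1 := Real.exp_zero
  -- error functional
  set err : (Fin M → X) → ℝ≥0∞ := fun c =>
    (M : ℝ≥0∞)⁻¹ * ∑ m, κ (c m) {y | ∃ j, j ≠ m ∧ q (c m) y ≤ q (c j) y} with herr
  have herrm : ∀ m : Fin M, Measurable fun c : Fin M → X =>
      κ (c m) {y | ∃ j, j ≠ m ∧ q (c m) y ≤ q (c j) y} :=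
    fun m => measurable_errProb κ hq_meas m
  have hMne : (M : ℝ≥0∞) ≠ 0 := Nat.cast_ne_zero.mpr (by omega)
  have hkey : ∫⁻ c, err c ∂(Measure.pi fun _ : Fin M => P_X)
      ≤ ENNReal.ofReal (∫ p, r p ∂Pμ) := by
    have h1 : ∫⁻ c, err c ∂(Measure.pi fun _ : Fin M => P_X)
        = (M : ℝ≥0∞)⁻¹ * ∑ m, ∫⁻ c, κ (c m) {y | ∃ j, j ≠ m ∧ q (c m) y ≤ q (c j) y}
            ∂(Measure.pi fun _ : Fin M => P_X) := by
      rw [herr]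
      rw [lintegral_const_mul' _ _ (ENNReal.inv_ne_top.mpr hMne)]
      rw [lintegral_finset_sum _ fun m _ => herrm m]
    rw [h1]
    calc (M : ℝ≥0∞)⁻¹ * ∑ m : Fin M, ∫⁻ c, κ (c m)
            {y | ∃ j, j ≠ m ∧ q (c m) y ≤ q (c j) y} ∂(Measure.pi fun _ : Fin M => P_X)
        ≤ (M : ℝ≥0∞)⁻¹ * ∑ _m : Fin M,
            ∫⁻ p : X × Y, min 1 ((M - 1 : ℕ) * P_X {x' | q p.1 p.2 ≤ q x' p.2}) ∂Pμ := by
          gcongr with m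
          exact avg_bound P_X κ q hq_meas m
      _ = ∫⁻ p : X × Y, min 1 ((M - 1 : ℕ) * P_X {x' | q p.1 p.2 ≤ q x' p.2}) ∂Pμ := by
          rw [Finset.sum_const, Finset.card_univ, Fintype.card_fin, nsmul_eq_mul,
            ← mul_assoc, ENNReal.inv_mul_cancel hMne (ENNReal.natCast_ne_top M), one_mul]
      _ ≤ ∫⁻ p : X × Y, ENNReal.ofReal (r p) ∂Pμ :=
          lintegral_mono fun p =>
            markov_ptwise P_X q C hq_meas hq_nonneg hq_bdd s hs M hM p.1 p.2
      _ = ENNReal.ofReal (∫ p, r p ∂Pμ) :=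
          (ofReal_integral_eq_lintegral_ofReal hri (ae_of_all _ hr_nonneg)).symm
  have hexists : ∃ c, err c ≤ ENNReal.ofReal (∫ p, r p ∂Pμ) := by
    by_contra hcon
    push_neg at hcon
    have herrmeas : Measurable err := by
      rw [herr]
      exact (Finset.measurable_sum Finset.univ fun m _ => herrm m).const_mul _
    have hlt := lintegral_strict_mono
      (μ := Measure.pi fun _ : Fin M => P_X)
      (f := fun _ => ENNReal.ofReal (∫ p, r p ∂Pμ)) (g := err)
      (IsProbabilityMeasure.ne_zero _) herrmeas.aemeasurable
      (by rw [lintegral_const, measure_univ, mul_one]; exact ENNReal.ofReal_ne_top)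
      (ae_of_all _ hcon)
    rw [lintegral_const, measure_univ, mul_one] at hlt
    exact absurd (hlt.trans_le hkey) (lt_irrefl _)
  obtain ⟨c, hc⟩ := hexists
  refine ⟨c, ?_⟩
  have hfin : ∀ m : Fin M,
      κ (c m) {y | ∃ j, j ≠ m ∧ q (c m) y ≤ q (c j) y} ≠ ∞ :=
    fun m => measure_ne_top _ _
  have hrewrite : (1 / (M : ℝ)) * ∑ m, (κ (c m)
        {y | ∃ j, j ≠ m ∧ q (c m) y ≤ q (c j) y}).toReal = (err c).toReal := by
    rw [herr]
    rw [ENNReal.toReal_mul, ENNReal.toReal_inv, ENNReal.toReal_natCast,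
      ENNReal.toReal_sum fun m _ => hfin m, one_div]
  rw [hrewrite]
  calc (err c).toReal ≤ (ENNReal.ofReal (∫ p, r p ∂Pμ)).toReal :=
        ENNReal.toReal_mono ENNReal.ofReal_ne_top hc
    _ = ∫ p, r p ∂Pμ := ENNReal.toReal_ofReal (integral_nonneg hr_nonneg)
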